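/- Let n > k ≥ 1 and let λ_1 ≥ λ_2 ≥ ⋯ ≥ λ_n = 0 be integers, and let 0 ≤ d ≤ λ_k. Let λ' be the partition (λ_1−d, …, λ_k−d) and λ'' the partition (λ_{k+1}, …, λ_n). Then the number of semistandard fillings of the skew shape λ∖[d]^k with entries in {1,…,n−k} is at most N(λ', n−k)·N(λ'', n−k), where N(μ, m) denotes the number of semistandard fillings of the (skew) shape μ with entries in {1,…,m}. Moreover, equality holds if λ_{k+1} ≤ d, and the number of semistandard fillings of λ∖[d]^k with entries in {1,…,n−k} equals 0 if d < λ_{n−k+1}. -/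
import Mathlib


noncomputable section

/-- A semistandard filling of the set `S` of cells, with entries in `{1, …, m}`:
the filling vanishes outside `S`, takes values in `{1, …, m}` on `S`, is weakly
increasing along rows and strictly increasing down columns (within `S`). -/
def IsSSYT (S : Set (ℕ × ℕ)) (m : ℕ) (T : ℕ × ℕ → ℕ) : Prop :=
  (∀ c, c ∉ S → T c = 0) ∧
  (∀ c ∈ S, 1 ≤ T c ∧ T c ≤ m) ∧
  (∀ i j, (i, j) ∈ S → (i, j + 1) ∈ S → T (i, j) ≤ T (i, j + 1)) ∧
  (∀ i j, (i, j) ∈ S → (i + 1, j) ∈ S → T (i, j) < T (i + 1, j))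

/-- The number of semistandard fillings of `S` with entries in `{1, …, m}`. -/
def countSSYT (S : Set (ℕ × ℕ)) (m : ℕ) : ℕ := Nat.card {T // IsSSYT S m T}

/-- The cells of the (straight) shape of the partition `(μ 1, …, μ r)`;
rows and columns are indexed starting from `1`. -/
def straightShape (r : ℕ) (μ : ℕ → ℕ) : Set (ℕ × ℕ) :=
  {c | 1 ≤ c.1 ∧ c.1 ≤ r ∧ 1 ≤ c.2 ∧ c.2 ≤ μ c.1}

/-- The cells of the skew shape `λ ∖ [d]^k` (within `n` rows): in the first `k` rows the
columns run over `d < j ≤ λ_i`, and in the remaining rows over `1 ≤ j ≤ λ_i`. -/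
def skewShape (n k d : ℕ) (lam : ℕ → ℕ) : Set (ℕ × ℕ) :=
  {c | 1 ≤ c.1 ∧ c.1 ≤ n ∧
    ((c.1 ≤ k ∧ d < c.2 ∧ c.2 ≤ lam c.1) ∨ (k < c.1 ∧ 1 ≤ c.2 ∧ c.2 ≤ lam c.1))}

/-- Fillings of a finite shape with bounded entries form a finite type. -/
lemma ssytFinite {S : Set (ℕ × ℕ)} (hS : S.Finite) (m : ℕ) :
    Finite {T // IsSSYT S m T} := by
  haveI := hS.to_subtype
  refine Finite.of_injective
    (fun T : {T // IsSSYT S m T} => fun c : S => (⟨T.1 c, by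
      have := T.2.2.1 c c.2; omega⟩ : Fin (m + 1))) ?_
  intro T U h
  apply Subtype.ext
  funext c
  by_cases hc : c ∈ S
  · exact congrArg Fin.val (congrFun h ⟨c, hc⟩)
  · rw [T.2.1 c hc, U.2.1 c hc]

theorem skew_filling_count (n k d : ℕ) (lam : ℕ → ℕ)
    (hk : 1 ≤ k) (hkn : k < n)
    (hmono : ∀ i, 1 ≤ i → i < n → lam (i + 1) ≤ lam i)
    (hlast : lam n = 0) (hd : d ≤ lam k) :
    (countSSYT (skewShape n k d lam) (n - k) ≤
      countSSYT (straightShape k (fun i => lam i - d)) (n - k) *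
        countSSYT (straightShape (n - k) (fun i => lam (k + i))) (n - k)) ∧
    (lam (k + 1) ≤ d →
      countSSYT (skewShape n k d lam) (n - k) =
        countSSYT (straightShape k (fun i => lam i - d)) (n - k) *
          countSSYT (straightShape (n - k) (fun i => lam (k + i))) (n - k)) ∧
    (d < lam (n - k + 1) → countSSYT (skewShape n k d lam) (n - k) = 0) := by
  classical
  -- antitonicity of lam
  have hanti : ∀ i j : ℕ, 1 ≤ i → i ≤ j → j ≤ n → lam j ≤ lam i := by
    intro i j hi hij hjn
    induction j with
    | zero => omega
    | succ j ih =>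
      rcases Nat.eq_or_lt_of_le hij with h | h
      · subst h; exact le_rfl
      · have h1 := hmono j (by omega) (by omega)
        have h2 := ih (by omega) (by omega)
        omega
  have hd1 : ∀ i, 1 ≤ i → i ≤ k → d ≤ lam i :=
    fun i h1 h2 => le_trans hd (hanti i k h1 h2 (le_of_lt hkn))
  -- membership characterizations
  have memS1 : ∀ a b : ℕ, ((a, b) ∈ straightShape k (fun i => lam i - d)) ↔
      (1 ≤ a ∧ a ≤ k ∧ 1 ≤ b ∧ b ≤ lam a - d) := by
    intro a b; simp [straightShape]
  have memS2 : ∀ a b : ℕ, ((a, b) ∈ straightShape (n - k) (fun i => lam (k + i))) ↔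
      (1 ≤ a ∧ a ≤ n - k ∧ 1 ≤ b ∧ b ≤ lam (k + a)) := by
    intro a b; simp [straightShape]
  have memS : ∀ a b : ℕ, ((a, b) ∈ skewShape n k d lam) ↔
      (1 ≤ a ∧ a ≤ n ∧ ((a ≤ k ∧ d < b ∧ b ≤ lam a) ∨ (k < a ∧ 1 ≤ b ∧ b ≤ lam a))) := by
    intro a b; simp [skewShape]
  -- finiteness of the shapes
  have hSfin : (skewShape n k d lam).Finite := by
    apply Set.Finite.subset (Set.finite_Icc ((1 : ℕ), (1 : ℕ)) (n, lam 1))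
    rintro ⟨a, b⟩ hab
    obtain ⟨h1, h2, h3⟩ := (memS a b).1 hab
    have hl := hanti 1 a le_rfl h1 (by omega)
    simp only [Set.mem_Icc, Prod.mk_le_mk]
    omega
  have hS1fin : (straightShape k (fun i => lam i - d)).Finite := by
    apply Set.Finite.subset (Set.finite_Icc ((1 : ℕ), (1 : ℕ)) (n, lam 1))
    rintro ⟨a, b⟩ hab
    obtain ⟨h1, h2, h3, h4⟩ := (memS1 a b).1 hab
    have hl := hanti 1 a le_rfl h1 (by omega)
    simp only [Set.mem_Icc, Prod.mk_le_mk]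
    omega
  have hS2fin : (straightShape (n - k) (fun i => lam (k + i))).Finite := by
    apply Set.Finite.subset (Set.finite_Icc ((1 : ℕ), (1 : ℕ)) (n, lam 1))
    rintro ⟨a, b⟩ hab
    obtain ⟨h1, h2, h3, h4⟩ := (memS2 a b).1 hab
    have hl := hanti 1 (k + a) le_rfl (by omega) (by omega)
    simp only [Set.mem_Icc, Prod.mk_le_mk]
    omega
  haveI iS := ssytFinite hSfin (n - k)
  haveI iS1 := ssytFinite hS1fin (n - k)
  haveI iS2 := ssytFinite hS2fin (n - k)
  -- the restriction maps
  have hF1 : ∀ T : ℕ × ℕ → ℕ, IsSSYT (skewShape n k d lam) (n - k) T →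
      IsSSYT (straightShape k (fun i => lam i - d)) (n - k)
        (fun c => if c ∈ straightShape k (fun i => lam i - d) then T (c.1, c.2 + d) else 0) := by
    intro T hT
    obtain ⟨h0, hb, hr, hcc⟩ := hT
    refine ⟨fun c hc => if_neg hc, ?_, ?_, ?_⟩
    · rintro ⟨a, b⟩ hc
      simp only [if_pos hc]
      obtain ⟨h1, h2, h3, h4⟩ := (memS1 a b).1 hc
      have hdl := hd1 a h1 h2
      exact hb (a, b + d) ((memS a (b + d)).2 ⟨h1, by omega, Or.inl ⟨h2, by omega, by omega⟩⟩)
    · intro i j hm1 hm2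
      simp only [if_pos hm1, if_pos hm2]
      obtain ⟨h1, h2, h3, h4⟩ := (memS1 i j).1 hm1
      obtain ⟨g1, g2, g3, g4⟩ := (memS1 i (j + 1)).1 hm2
      have hdl := hd1 i h1 h2
      have he : j + 1 + d = (j + d) + 1 := by omega
      rw [he]
      exact hr i (j + d)
        ((memS i (j + d)).2 ⟨h1, by omega, Or.inl ⟨h2, by omega, by omega⟩⟩)
        ((memS i (j + d + 1)).2 ⟨h1, by omega, Or.inl ⟨h2, by omega, by omega⟩⟩)
    · intro i j hm1 hm2
      simp only [if_pos hm1, if_pos hm2]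
      obtain ⟨h1, h2, h3, h4⟩ := (memS1 i j).1 hm1
      obtain ⟨g1, g2, g3, g4⟩ := (memS1 (i + 1) j).1 hm2
      have hdl := hd1 i h1 h2
      have hdl2 := hd1 (i + 1) g1 g2
      exact hcc i (j + d)
        ((memS i (j + d)).2 ⟨h1, by omega, Or.inl ⟨h2, by omega, by omega⟩⟩)
        ((memS (i + 1) (j + d)).2 ⟨g1, by omega, Or.inl ⟨g2, by omega, by omega⟩⟩)
  have hF2 : ∀ T : ℕ × ℕ → ℕ, IsSSYT (skewShape n k d lam) (n - k) T →
      IsSSYT (straightShape (n - k) (fun i => lam (k + i))) (n - k)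
        (fun c => if c ∈ straightShape (n - k) (fun i => lam (k + i)) then T (c.1 + k, c.2) else 0) := by
    intro T hT
    obtain ⟨h0, hb, hr, hcc⟩ := hT
    refine ⟨fun c hc => if_neg hc, ?_, ?_, ?_⟩
    · rintro ⟨a, b⟩ hc
      simp only [if_pos hc]
      obtain ⟨h1, h2, h3, h4⟩ := (memS2 a b).1 hc
      refine hb (a + k, b) ((memS (a + k) b).2 ⟨by omega, by omega, Or.inr ⟨by omega, h3, ?_⟩⟩)
      have : k + a = a + k := by omega
      rw [this] at h4; exact h4
    · intro i j hm1 hm2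
      simp only [if_pos hm1, if_pos hm2]
      obtain ⟨h1, h2, h3, h4⟩ := (memS2 i j).1 hm1
      obtain ⟨g1, g2, g3, g4⟩ := (memS2 i (j + 1)).1 hm2
      have he : k + i = i + k := by omega
      rw [he] at h4 g4
      exact hr (i + k) j
        ((memS (i + k) j).2 ⟨by omega, by omega, Or.inr ⟨by omega, h3, h4⟩⟩)
        ((memS (i + k) (j + 1)).2 ⟨by omega, by omega, Or.inr ⟨by omega, by omega, g4⟩⟩)
    · intro i j hm1 hm2
      simp only [if_pos hm1, if_pos hm2]
      obtain ⟨h1, h2, h3, h4⟩ := (memS2 i j).1 hm1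
      obtain ⟨g1, g2, g3, g4⟩ := (memS2 (i + 1) j).1 hm2
      have he : k + i = i + k := by omega
      have he2 : k + (i + 1) = i + k + 1 := by omega
      rw [he] at h4
      rw [he2] at g4
      have := hcc (i + k) j
        ((memS (i + k) j).2 ⟨by omega, by omega, Or.inr ⟨by omega, h3, h4⟩⟩)
        ((memS (i + k + 1) j).2 ⟨by omega, by omega, Or.inr ⟨by omega, g3, g4⟩⟩)
      have he3 : i + 1 + k = i + k + 1 := by omega
      rw [he3]
      exact this
  -- the combined map
  let Φ : {T // IsSSYT (skewShape n k d lam) (n - k) T} →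
      {T // IsSSYT (straightShape k (fun i => lam i - d)) (n - k) T} ×
      {T // IsSSYT (straightShape (n - k) (fun i => lam (k + i))) (n - k) T} :=
    fun T => (⟨_, hF1 T.1 T.2⟩, ⟨_, hF2 T.1 T.2⟩)
  have hinj : Function.Injective Φ := by
    intro T U h
    have h1 : (fun c : ℕ × ℕ => if c ∈ straightShape k (fun i => lam i - d) then T.1 (c.1, c.2 + d) else 0)
        = (fun c : ℕ × ℕ => if c ∈ straightShape k (fun i => lam i - d) then U.1 (c.1, c.2 + d) else 0) :=
      congrArg (fun p => p.1.1) h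
    have h2 : (fun c : ℕ × ℕ => if c ∈ straightShape (n - k) (fun i => lam (k + i)) then T.1 (c.1 + k, c.2) else 0)
        = (fun c : ℕ × ℕ => if c ∈ straightShape (n - k) (fun i => lam (k + i)) then U.1 (c.1 + k, c.2) else 0) :=
      congrArg (fun p => p.2.1) h
    apply Subtype.ext
    funext c
    obtain ⟨a, b⟩ := c
    by_cases hcS : (a, b) ∈ skewShape n k d lam
    · obtain ⟨hc1, hc2, hc3⟩ := (memS a b).1 hcS
      rcases hc3 with ⟨hik, hdj, hjl⟩ | ⟨hik, hj1, hjl⟩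
      · have hmem : (a, b - d) ∈ straightShape k (fun i => lam i - d) :=
          (memS1 a (b - d)).2 ⟨hc1, hik, by omega, by omega⟩
        have h3 := congrFun h1 (a, b - d)
        simp only [if_pos hmem] at h3
        have he : b - d + d = b := by omega
        rw [he] at h3
        exact h3
      · have he : k + (a - k) = a := by omega
        have hmem : (a - k, b) ∈ straightShape (n - k) (fun i => lam (k + i)) :=
          (memS2 (a - k) b).2 ⟨by omega, by omega, hj1, by rw [he]; exact hjl⟩
        have h3 := congrFun h2 (a - k, b)
        simp only [if_pos hmem] at h3
        have he2 : a - k + k = a := by omega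
        rw [he2] at h3
        exact h3
    · rw [T.2.1 (a, b) hcS, U.2.1 (a, b) hcS]
  refine ⟨?_, ?_, ?_⟩
  · exact (Nat.card_le_card_of_injective Φ hinj).trans_eq (Nat.card_prod _ _)
  · -- equality when lam (k+1) ≤ d: the shape splits, build the inverse.
    intro hsplit
    have hla : ∀ a, k < a → a ≤ n → lam a ≤ d :=
      fun a h1 h2 => le_trans (hanti (k + 1) a (by omega) (by omega) h2) hsplit
    have hsurj : Function.Surjective Φ := by
      rintro ⟨T1, T2⟩
      -- the glued filling
      set G : ℕ × ℕ → ℕ := fun c =>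
        if c ∈ skewShape n k d lam then
          (if c.1 ≤ k then T1.1 (c.1, c.2 - d) else T2.1 (c.1 - k, c.2)) else 0 with hG
      have hGS : IsSSYT (skewShape n k d lam) (n - k) G := by
        obtain ⟨a0, ab, ar, ac⟩ := T1.2
        obtain ⟨b0, bb, br, bc⟩ := T2.2
        refine ⟨fun c hc => if_neg hc, ?_, ?_, ?_⟩
        · rintro ⟨a, b⟩ hc
          obtain ⟨h1, h2, h3⟩ := (memS a b).1 hc
          simp only [hG, if_pos hc]
          rcases h3 with ⟨hik, hdj, hjl⟩ | ⟨hik, hj1, hjl⟩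
          · rw [if_pos hik]
            exact ab (a, b - d) ((memS1 a (b - d)).2 ⟨h1, hik, by omega, by omega⟩)
          · rw [if_neg (by omega)]
            have he : k + (a - k) = a := by omega
            exact bb (a - k, b) ((memS2 (a - k) b).2 ⟨by omega, by omega, hj1, by rw [he]; exact hjl⟩)
        · intro i j hm1 hm2
          obtain ⟨h1, h2, h3⟩ := (memS i j).1 hm1
          obtain ⟨g1, g2, g3⟩ := (memS i (j + 1)).1 hm2
          simp only [hG, if_pos hm1, if_pos hm2]
          rcases h3 with ⟨hik, hdj, hjl⟩ | ⟨hik, hj1, hjl⟩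
          · rw [if_pos hik, if_pos hik]
            have he : j + 1 - d = (j - d) + 1 := by omega
            rw [he]
            have hjl2 : j + 1 ≤ lam i := by
              rcases g3 with ⟨_, _, h⟩ | ⟨h, _, _⟩
              · exact ‹_›
              · omega
            exact ar i (j - d)
              ((memS1 i (j - d)).2 ⟨h1, hik, by omega, by omega⟩)
              ((memS1 i (j - d + 1)).2 ⟨h1, hik, by omega, by omega⟩)
          · rw [if_neg (by omega), if_neg (by omega)]
            have he : k + (i - k) = i := by omega
            have hjl2 : j + 1 ≤ lam i := by
              rcases g3 with ⟨h, _, _⟩ | ⟨_, _, h⟩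
              · omega
              · exact ‹_›
            exact br (i - k) j
              ((memS2 (i - k) j).2 ⟨by omega, by omega, hj1, by rw [he]; exact hjl⟩)
              ((memS2 (i - k) (j + 1)).2 ⟨by omega, by omega, by omega, by rw [he]; exact hjl2⟩)
        · intro i j hm1 hm2
          obtain ⟨h1, h2, h3⟩ := (memS i j).1 hm1
          obtain ⟨g1, g2, g3⟩ := (memS (i + 1) j).1 hm2
          simp only [hG, if_pos hm1, if_pos hm2]
          by_cases hik1 : i + 1 ≤ k
          · -- both rows in the top part
            have hik : i ≤ k := by omega
            have hdj : d < j := by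
              rcases h3 with ⟨_, h, _⟩ | ⟨h, _, _⟩
              · exact h
              · omega
            have hjl : j ≤ lam i := by
              rcases h3 with ⟨_, _, h⟩ | ⟨_, _, h⟩ <;> exact h
            have hjl2 : j ≤ lam (i + 1) := by
              rcases g3 with ⟨_, _, h⟩ | ⟨h, _, _⟩
              · exact ‹_›
              · omega
            rw [if_pos hik, if_pos hik1]
            exact ac i (j - d)
              ((memS1 i (j - d)).2 ⟨h1, hik, by omega, by omega⟩)
              ((memS1 (i + 1) (j - d)).2 ⟨by omega, hik1, by omega, by omega⟩)
          · by_cases hik : i ≤ k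
            · -- i = k : impossible, since the shape splits
              exfalso
              have hi : i = k := by omega
              have hdj : d < j := by
                rcases h3 with ⟨_, h, _⟩ | ⟨h, _, _⟩
                · exact h
                · omega
              have hjl2 : j ≤ lam (i + 1) := by
                rcases g3 with ⟨h, _, _⟩ | ⟨_, _, h⟩
                · omega
                · exact ‹_›
              have := hla (i + 1) (by omega) g2
              omega
            · -- both rows in the bottom part
              have hj1 : 1 ≤ j := by
                rcases h3 with ⟨_, h, _⟩ | ⟨_, h, _⟩ <;> omega
              have hjl : j ≤ lam i := by
                rcases h3 with ⟨_, _, h⟩ | ⟨_, _, h⟩ <;> exact h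
              have hjl2 : j ≤ lam (i + 1) := by
                rcases g3 with ⟨_, _, h⟩ | ⟨_, _, h⟩ <;> exact h
              rw [if_neg hik, if_neg (by omega)]
              have he : k + (i - k) = i := by omega
              have he2 : k + (i - k + 1) = i + 1 := by omega
              have := bc (i - k) j
                ((memS2 (i - k) j).2 ⟨by omega, by omega, hj1, by rw [he]; exact hjl⟩)
                ((memS2 (i - k + 1) j).2 ⟨by omega, by omega, hj1, by rw [he2]; exact hjl2⟩)
              have he3 : i + 1 - k = i - k + 1 := by omega
              rw [he3]
              exact this
      refine ⟨⟨G, hGS⟩, ?_⟩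
      have hfst : (fun c : ℕ × ℕ => if c ∈ straightShape k (fun i => lam i - d) then G (c.1, c.2 + d) else 0) = T1.1 := by
        funext c
        obtain ⟨a, b⟩ := c
        by_cases hc : (a, b) ∈ straightShape k (fun i => lam i - d)
        · rw [if_pos hc]
          obtain ⟨h1, h2, h3, h4⟩ := (memS1 a b).1 hc
          have hdl := hd1 a h1 h2
          have hmem : (a, b + d) ∈ skewShape n k d lam :=
            (memS a (b + d)).2 ⟨h1, by omega, Or.inl ⟨h2, by omega, by omega⟩⟩
          simp only [hG, if_pos hmem, if_pos h2]
          have he : b + d - d = b := by omega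
          rw [he]
        · rw [if_neg hc]
          exact (T1.2.1 (a, b) hc).symm
      have hsnd : (fun c : ℕ × ℕ => if c ∈ straightShape (n - k) (fun i => lam (k + i)) then G (c.1 + k, c.2) else 0) = T2.1 := by
        funext c
        obtain ⟨a, b⟩ := c
        by_cases hc : (a, b) ∈ straightShape (n - k) (fun i => lam (k + i))
        · rw [if_pos hc]
          obtain ⟨h1, h2, h3, h4⟩ := (memS2 a b).1 hc
          have he : k + a = a + k := by omega
          rw [he] at h4
          have hmem : (a + k, b) ∈ skewShape n k d lam :=
            (memS (a + k) b).2 ⟨by omega, by omega, Or.inr ⟨by omega, h3, h4⟩⟩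
          simp only [hG, if_pos hmem, if_neg (show ¬ (a + k ≤ k) by omega)]
          have he2 : a + k - k = a := by omega
          rw [he2]
        · rw [if_neg hc]
          exact (T2.2.1 (a, b) hc).symm
      exact Prod.ext (Subtype.ext hfst) (Subtype.ext hsnd)
    have := Nat.card_congr (Equiv.ofBijective Φ ⟨hinj, hsurj⟩)
    rw [Nat.card_prod] at this
    exact this
  · -- vanishing when d < lam (n - k + 1)
    intro hbig
    have : IsEmpty {T // IsSSYT (skewShape n k d lam) (n - k) T} := by
      constructor
      rintro ⟨T, h0, hb, hr, hcc⟩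
      have hmemcol : ∀ i, 1 ≤ i → i ≤ n - k + 1 → (i, d + 1) ∈ skewShape n k d lam := by
        intro i h1 h2
        have hla : lam (n - k + 1) ≤ lam i := hanti i (n - k + 1) h1 h2 (by omega)
        by_cases hik : i ≤ k
        · exact (memS i (d + 1)).2 ⟨h1, by omega, Or.inl ⟨hik, by omega, by omega⟩⟩
        · exact (memS i (d + 1)).2 ⟨h1, by omega, Or.inr ⟨by omega, by omega, by omega⟩⟩
      have key : ∀ i, 1 ≤ i → i ≤ n - k + 1 → i ≤ T (i, d + 1) := by
        intro i h1 h2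
        induction i with
        | zero => omega
        | succ i ih =>
          by_cases hi0 : i = 0
          · subst hi0
            have := (hb (0 + 1, d + 1) (hmemcol (0 + 1) (by omega) (by omega))).1
            omega
          · have hstep := hcc i (d + 1) (hmemcol i (by omega) (by omega))
              (hmemcol (i + 1) (by omega) h2)
            have := ih (by omega) (by omega)
            omega
      have h1 := key (n - k + 1) (by omega) le_rfl
      have h2 := (hb ((n - k + 1), d + 1) (hmemcol (n - k + 1) (by omega) le_rfl)).2
      omega
    exact Nat.card_of_isEmpty

end
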